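/- Let H be a minimal solution of a ground ILP task for distinct examples (B, L, ⟨E_1, …, E_n⟩), and suppose that for every i the program B ∪ O_i ∪ H is stratified, with unique stable model M_i. Then every rule r ∈ H is active in at least one of the contexts, i.e., for every r ∈ H there exists i ∈ {1, …, n} with pos(r) ⊆ M_i, neg(r) ∩ M_i = ∅, and head(r) ∈ M_i. -/

import Mathlib

namespace ASP

/-- A ground normal rule: a head atom, a finite set of positive body atoms,
and a finite set of negated body atoms. -/
structure Rule (α : Type) where
  head : α
  pos : Finset α
  neg : Finset α
deriving DecidableEq

variable {α : Type}

/-- An interpretation `M` satisfies a rule `r` if `head r ∈ M` whenever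
`pos r ⊆ M` and `neg r ∩ M = ∅`. -/
def ruleSat (M : Set α) (r : Rule α) : Prop :=
  ((↑r.pos : Set α) ⊆ M ∧ ∀ a ∈ r.neg, a ∉ M) → r.head ∈ M

/-- `M` is a model of a program if it satisfies every rule. -/
def isModel (M : Set α) (P : Set (Rule α)) : Prop :=
  ∀ r ∈ P, ruleSat M r

/-- A definite program has no negated body atoms. -/
def isDefinite (P : Set (Rule α)) : Prop :=
  ∀ r ∈ P, r.neg = ∅

/-- The reduct `P^M`: the definite program
`{(head r, pos r, ∅) : r ∈ P, neg r ∩ M = ∅}`. -/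
def reduct (P : Set (Rule α)) (M : Set α) : Set (Rule α) :=
  {r' | ∃ r ∈ P, (∀ a ∈ r.neg, a ∉ M) ∧ r' = ⟨r.head, r.pos, ∅⟩}

/-- `M` is the least model of `P`: a model contained in every model of `P`. -/
def isLeastModel (M : Set α) (P : Set (Rule α)) : Prop :=
  isModel M P ∧ ∀ M', isModel M' P → M ⊆ M'

/-- `M` is a stable model (answer set) of `P` if `M` is the least model of
the reduct `P^M`. -/
def isStable (M : Set α) (P : Set (Rule α)) : Prop :=
  isLeastModel M (reduct P M)

/-- A program is stratified if there is a stratification function `s` on atoms. -/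
def isStratified (P : Set (Rule α)) : Prop :=
  ∃ s : α → ℕ, ∀ r ∈ P,
    (∀ a ∈ r.pos, s a ≤ s r.head) ∧ (∀ a ∈ r.neg, s a < s r.head)

/-- `P ⊢ a` : atom `a` belongs to every stable model of `P`. -/
def entails (P : Set (Rule α)) (a : α) : Prop :=
  ∀ M, isStable M P → a ∈ M

/-- `H1 ≤ H2` for finite ground programs: there is an injective map `f` from the
rules of `H1` to the rules of `H2` preserving heads and (weakly) enlarging bodies. -/
def progLE (H1 H2 : Finset (Rule α)) : Prop :=
  ∃ f : Rule α → Rule α, Set.InjOn f ↑H1 ∧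
    ∀ r ∈ H1, f r ∈ H2 ∧ (f r).head = r.head ∧ r.pos ⊆ (f r).pos ∧ r.neg ⊆ (f r).neg

/-- `H1 < H2` iff `H1 ≤ H2` and `H1 ≠ H2`. -/
def progLT (H1 H2 : Finset (Rule α)) : Prop :=
  progLE H1 H2 ∧ H1 ≠ H2

/-- A context-dependent example: an observation program `obs` together with finite
sets of positive and negative example atoms. -/
structure ILPExample (α : Type) where
  obs : Set (Rule α)
  epos : Finset α
  eneg : Finset α

/-- `H` covers example `E` (relative to background `B`): every positive example atom
belongs to every stable model of `B ∪ O ∪ H`, and no negative example atom does. -/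
def covers (B : Set (Rule α)) (H : Finset (Rule α)) (E : ILPExample α) : Prop :=
  (∀ a ∈ E.epos, entails (B ∪ E.obs ∪ ↑H) a) ∧
  (∀ a ∈ E.eneg, ¬ entails (B ∪ E.obs ∪ ↑H) a)

/-- `H` is a solution of the ILP task for distinct examples `(B, L, Es)`. -/
def isSolution (B L : Set (Rule α)) (Es : List (ILPExample α))
    (H : Finset (Rule α)) : Prop :=
  (↑H : Set (Rule α)) ⊆ L ∧ ∀ E ∈ Es, covers B H E

/-- A solution `H` is minimal if no solution `H'` satisfies `H' < H`. -/
def isMinimalSolution (B L : Set (Rule α)) (Es : List (ILPExample α))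
    (H : Finset (Rule α)) : Prop :=
  isSolution B L Es H ∧ ¬∃ H', isSolution B L Es H' ∧ progLT H' H

lemma reduct_definite (P : Set (Rule α)) (M : Set α) : isDefinite (reduct P M) := by
  rintro r' ⟨r, _, _, rfl⟩; rfl

lemma inter_model {Q : Set (Rule α)} (hQ : isDefinite Q) {M N : Set α}
    (hM : isModel M Q) (hN : isModel N Q) : isModel (M ∩ N) Q := by
  rintro r hr ⟨hpos, _⟩
  have hposM : (↑r.pos : Set α) ⊆ M := fun a ha => (hpos ha).1
  have hposN : (↑r.pos : Set α) ⊆ N := fun a ha => (hpos ha).2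
  have hneg : ∀ a ∈ r.neg, a ∉ M := by simp [hQ r hr]
  have hneg' : ∀ a ∈ r.neg, a ∉ N := by simp [hQ r hr]
  exact ⟨hM r hr ⟨hposM, hneg⟩, hN r hr ⟨hposN, hneg'⟩⟩

lemma stratified_step {P : Set (Rule α)} {s : α → ℕ}
    (hs : ∀ r ∈ P, (∀ a ∈ r.pos, s a ≤ s r.head) ∧ (∀ a ∈ r.neg, s a < s r.head))
    {M N : Set α} (hM : isStable M P) (hN : isStable N P)
    {n : ℕ} (hagree : ∀ b, s b < n → (b ∈ M ↔ b ∈ N))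
    {a : α} (ha : a ∈ N) (han : s a = n) : a ∈ M := by
  have hKmod : isModel (M ∪ {b | n < s b}) (reduct P N) := by
    rintro r' ⟨r, hrP, hrneg, rfl⟩ ⟨hpos, _⟩
    by_cases hh : n < s r.head
    · exact Or.inr hh
    push_neg at hh
    have hposM : (↑r.pos : Set α) ⊆ M := by
      intro b hb
      rcases hpos hb with h | h
      · exact h
      · exact absurd (lt_of_lt_of_le h (le_trans ((hs r hrP).1 b hb) hh)) (lt_irrefl n)
    have hnegM : ∀ b ∈ r.neg, b ∉ M := by
      intro b hb hbM
      have hlt : s b < n := lt_of_lt_of_le ((hs r hrP).2 b hb) hh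
      exact hrneg b hb ((hagree b hlt).mp hbM)
    have : r.head ∈ M := hM.1 ⟨r.head, r.pos, ∅⟩ ⟨r, hrP, hnegM, rfl⟩ ⟨hposM, by simp⟩
    exact Or.inl this
  have hsub : N ⊆ M ∪ {b | n < s b} := hN.2 _ hKmod
  rcases hsub ha with h | h
  · exact h
  · exact absurd (han ▸ h) (lt_irrefl n)

lemma stratified_unique {P : Set (Rule α)} (h : isStratified P) {M N : Set α}
    (hM : isStable M P) (hN : isStable N P) : M = N := by
  obtain ⟨s, hs⟩ := h
  have key : ∀ n, ∀ a, s a = n → (a ∈ M ↔ a ∈ N) := by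
    intro n
    induction n using Nat.strong_induction_on with
    | _ n ih =>
      intro a han
      have hagree : ∀ b, s b < n → (b ∈ M ↔ b ∈ N) := fun b hb => ih (s b) hb b rfl
      constructor
      · intro haM
        exact stratified_step hs hN hM (fun b hb => (hagree b hb).symm) haM han
      · intro haN
        exact stratified_step hs hM hN hagree haN han
  ext a
  exact key (s a) a rfl

lemma stable_of_erase {P P' : Set (Rule α)} {r : Rule α} {M : Set α}
    (hsub : P' ⊆ P) (hsup : P ⊆ P' ∪ {r})
    (hM : isStable M P)
    (hinact : ¬((↑r.pos : Set α) ⊆ M ∧ (∀ a ∈ r.neg, a ∉ M) ∧ r.head ∈ M)) :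
    isStable M P' := by
  have hredsub : reduct P' M ⊆ reduct P M := by
    rintro ρ ⟨q, hq, hneg, rfl⟩; exact ⟨q, hsub hq, hneg, rfl⟩
  have hMmod' : isModel M (reduct P' M) := fun ρ hρ => hM.1 ρ (hredsub hρ)
  refine ⟨hMmod', ?_⟩
  intro M' hM'
  have hNmod : isModel (M ∩ M') (reduct P M) := by
    rintro ρ ⟨q, hq, hneg, rfl⟩ ⟨hpos, _⟩
    rcases hsup hq with hq' | hq'
    · exact inter_model (reduct_definite P' M) hMmod' hM' _ ⟨q, hq', hneg, rfl⟩
        ⟨hpos, by simp⟩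
    · have hqr : q = r := hq'
      subst hqr
      have hposM : (↑q.pos : Set α) ⊆ M := fun b hb => (hpos hb).1
      exact absurd ⟨hposM, hneg, hM.1 ⟨q.head, q.pos, ∅⟩ ⟨q, hq, hneg, rfl⟩ ⟨hposM, by simp⟩⟩ hinact
  exact fun a haM => (hM.2 _ hNmod haM).2

/-- If `H` is a minimal solution of the ILP task for distinct
examples `(B, L, Es)` and for every `i` the program `B ∪ O_i ∪ H` is stratified
with unique stable model `M i`, then every rule of `H` is active (body satisfied
and head true) in at least one of the contexts `M i`. -/
theorem minimal_solution_rule_active_somewhere {α : Type}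
    (B L : Set (Rule α)) (Es : List (ILPExample α)) (H : Finset (Rule α))
    (M : Fin Es.length → Set α)
    (hmin : isMinimalSolution B L Es H)
    (hstrat : ∀ i : Fin Es.length, isStratified (B ∪ (Es.get i).obs ∪ ↑H))
    (hstab : ∀ i : Fin Es.length, isStable (M i) (B ∪ (Es.get i).obs ∪ ↑H))
    (huniq : ∀ (i : Fin Es.length) (M' : Set α),
      isStable M' (B ∪ (Es.get i).obs ∪ ↑H) → M' = M i) :
    ∀ r ∈ H, ∃ i : Fin Es.length,
      (↑r.pos : Set α) ⊆ M i ∧ (∀ a ∈ r.neg, a ∉ M i) ∧ r.head ∈ M i := by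
  classical
  intro r hr
  by_contra hcon
  set H' : Finset (Rule α) := H.erase r with hH'
  have hinact : ∀ i : Fin Es.length,
      ¬((↑r.pos : Set α) ⊆ M i ∧ (∀ a ∈ r.neg, a ∉ M i) ∧ r.head ∈ M i) :=
    fun i h => hcon ⟨i, h⟩
  -- set relations
  have hsub : ∀ i : Fin Es.length,
      (B ∪ (Es.get i).obs ∪ ↑H' : Set (Rule α)) ⊆ B ∪ (Es.get i).obs ∪ ↑H := by
    intro i x hx
    rcases hx with hx | hx
    · exact Or.inl hx
    · exact Or.inr (Finset.mem_of_mem_erase hx)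
  have hsup : ∀ i : Fin Es.length,
      (B ∪ (Es.get i).obs ∪ ↑H : Set (Rule α)) ⊆ (B ∪ (Es.get i).obs ∪ ↑H') ∪ {r} := by
    intro i x hx
    rcases hx with hx | hx
    · exact Or.inl (Or.inl hx)
    · by_cases hxr : x = r
      · exact Or.inr hxr
      · exact Or.inl (Or.inr (Finset.mem_erase.mpr ⟨hxr, hx⟩))
  have hstab' : ∀ i : Fin Es.length, isStable (M i) (B ∪ (Es.get i).obs ∪ ↑H') :=
    fun i => stable_of_erase (hsub i) (hsup i) (hstab i) (hinact i)
  have hstrat' : ∀ i : Fin Es.length, isStratified (B ∪ (Es.get i).obs ∪ ↑H') := by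
    intro i
    obtain ⟨s, hs⟩ := hstrat i
    exact ⟨s, fun q hq => hs q (hsub i hq)⟩
  -- H' is a solution
  have hsol' : isSolution B L Es H' := by
    constructor
    · intro x hx
      exact hmin.1.1 (Finset.mem_coe.mpr (Finset.mem_of_mem_erase (Finset.mem_coe.mp hx)))
    · intro E hE
      obtain ⟨i, hi⟩ := List.mem_iff_get.mp hE
      subst hi
      have hcov : covers B H (Es.get i) := hmin.1.2 _ (Es.get_mem i)
      constructor
      · intro a ha M' hM'
        have : M' = M i := stratified_unique (hstrat' i) hM' (hstab' i)
        subst this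
        exact hcov.1 a ha (M i) (hstab i)
      · intro a ha hent
        apply hcov.2 a ha
        intro M'' hM''
        have : M'' = M i := huniq i M'' hM''
        subst this
        exact hent (M i) (hstab' i)
  -- H' < H
  have hlt : progLT H' H := by
    constructor
    · exact ⟨id, Set.injOn_id _, fun q hq =>
        ⟨Finset.mem_of_mem_erase hq, rfl, Finset.Subset.refl _, Finset.Subset.refl _⟩⟩
    · intro h
      have : r ∈ H' := h ▸ hr
      exact (Finset.mem_erase.mp this).1 rfl
  exact hmin.2 ⟨H', hsol', hlt⟩

end ASP
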